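/- The gradients of T²·L_KD and of L_LM agree in the high-temperature limit when evaluated at equal-mean logits: for all i, lim_{T→∞} ∂(T²L_KD)/∂z^s_i exists and equals ∂L_LM/∂z^s_i, given Σ_j z^s_j = Σ_j z^t_j. -/

import Mathlib

open Filter

open Real in
lemma lim_mul_exp_sub_one (c : ℝ) :
    Tendsto (fun T : ℝ => T * (Real.exp (c / T) - 1)) atTop (nhds c) := by
  have h1 : HasDerivAt (fun t : ℝ => c * t) c 0 := by
    simpa using (hasDerivAt_id (0:ℝ)).const_mul c
  have h2 := h1.exp
  simp only [mul_zero, Real.exp_zero, mul_one, one_mul] at h2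
  have h3 := hasDerivAt_iff_tendsto_slope.mp h2
  have h4 : Tendsto (fun T : ℝ => T⁻¹) atTop (nhdsWithin 0 {(0:ℝ)}ᶜ) :=
    tendsto_inv_atTop_nhdsGT_zero.mono_right (nhdsWithin_mono _ (fun x hx => ne_of_gt hx))
  have h5 := h3.comp h4
  refine h5.congr' ?_
  filter_upwards [eventually_gt_atTop 0] with T hT
  have hT' : T ≠ 0 := ne_of_gt hT
  simp [Function.comp, slope_def_field, div_eq_mul_inv, Real.exp_zero]
  field_simp

lemma lim_exp_div (c : ℝ) : Tendsto (fun T : ℝ => Real.exp (c / T)) atTop (nhds 1) := by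
  have : Tendsto (fun T : ℝ => c / T) atTop (nhds 0) := by
    simpa [div_eq_mul_inv] using tendsto_inv_atTop_zero.const_mul c
  simpa [Function.comp_def] using (Real.continuous_exp.tendsto 0).comp this

noncomputable def softmax (K : ℕ) (T : ℝ) (z : Fin K → ℝ) (i : Fin K) : ℝ :=
  Real.exp (z i / T) / ∑ j, Real.exp (z j / T)

/-- Given equal-mean logits, for every `i` the high-temperature limit of the KD
    gradient `T(pˢ_i(T) − pᵗ_i(T))` exists and equals the logits-matching
    gradient `(zˢ_i − zᵗ_i)/K`, which is the derivative of
    `L_LM(w) = (1/(2K))∑ (zᵗ_k − w_k)²` in the `i`-th coordinate at `zs`. -/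
theorem kd_eq_lm_grad_high_temp (K : ℕ) (hK : 1 ≤ K) (zt zs : Fin K → ℝ)
    (hmean : ∑ j, zs j = ∑ j, zt j) (i : Fin K) :
    Tendsto (fun T : ℝ => T * (softmax K T zs i - softmax K T zt i)) atTop
      (nhds ((zs i - zt i) / (K : ℝ)))
    ∧
    HasDerivAt
      (fun x : ℝ => (1 / (2 * (K : ℝ))) * ∑ k, (zt k - Function.update zs i x k) ^ 2)
      ((zs i - zt i) / (K : ℝ)) (zs i) := by
  have hK0 : (K : ℝ) ≠ 0 := by positivity
  haveI : Nonempty (Fin K) := Fin.pos_iff_nonempty.mp hK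
  constructor
  · -- limit part
    have hSs : Tendsto (fun T : ℝ => ∑ j, Real.exp (zs j / T)) atTop (nhds (K : ℝ)) := by
      have := tendsto_finset_sum Finset.univ (fun j _ => lim_exp_div (zs j))
      simpa using this
    have hSt : Tendsto (fun T : ℝ => ∑ j, Real.exp (zt j / T)) atTop (nhds (K : ℝ)) := by
      have := tendsto_finset_sum Finset.univ (fun j _ => lim_exp_div (zt j))
      simpa using this
    have hnum : Tendsto
        (fun T : ℝ => ∑ j, (T * (Real.exp ((zs i + zt j) / T) - 1)
          - T * (Real.exp ((zt i + zs j) / T) - 1))) atTop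
        (nhds ((K : ℝ) * (zs i - zt i))) := by
      have h := tendsto_finset_sum (Finset.univ : Finset (Fin K))
        (fun j _ => (lim_mul_exp_sub_one (zs i + zt j)).sub (lim_mul_exp_sub_one (zt i + zs j)))
      have : ∑ j : Fin K, ((zs i + zt j) - (zt i + zs j)) = (K : ℝ) * (zs i - zt i) := by
        simp [Finset.sum_sub_distrib, Finset.sum_add_distrib, hmean, Finset.card_univ]
        ring
      rw [← this]
      exact h
    have hdiv := hnum.div (hSs.mul hSt) (by positivity)
    have hlim : ((K : ℝ) * (zs i - zt i)) / ((K : ℝ) * (K : ℝ)) = (zs i - zt i) / (K : ℝ) := by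
      field_simp
    rw [hlim] at hdiv
    refine hdiv.congr' ?_
    filter_upwards [eventually_gt_atTop 0] with T hT
    have hs : (0:ℝ) < ∑ j, Real.exp (zs j / T) :=
      Finset.sum_pos (fun j _ => Real.exp_pos _) Finset.univ_nonempty
    have ht : (0:ℝ) < ∑ j, Real.exp (zt j / T) :=
      Finset.sum_pos (fun j _ => Real.exp_pos _) Finset.univ_nonempty
    simp only [Pi.div_apply]
    unfold softmax
    rw [div_sub_div _ _ (ne_of_gt hs) (ne_of_gt ht), ← mul_div_assoc]
    congr 1
    simp only [add_div, Real.exp_add, mul_sub, mul_one, Finset.sum_sub_distrib,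
      ← Finset.mul_sum]
    ring
  · -- derivative part
    have hsum : ∀ x : ℝ, ∑ k, (zt k - Function.update zs i x k) ^ 2
        = (zt i - x) ^ 2 + ∑ k ∈ Finset.univ.erase i, (zt k - zs k) ^ 2 := by
      intro x
      rw [← Finset.add_sum_erase _ _ (Finset.mem_univ i), Function.update_self]
      congr 1
      exact Finset.sum_congr rfl (fun k hk =>
        by rw [Function.update_of_ne (Finset.ne_of_mem_erase hk)])
    have h1 : HasDerivAt (fun x : ℝ => (zt i - x) ^ 2) (2 * (zt i - zs i) * (-1)) (zs i) := by
      have := (((hasDerivAt_id (zs i)).const_sub (zt i)).pow 2)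
      simpa [Pi.pow_def] using this
    have h2 : HasDerivAt
        (fun x : ℝ => (zt i - x) ^ 2 + ∑ k ∈ Finset.univ.erase i, (zt k - zs k) ^ 2)
        (2 * (zt i - zs i) * (-1)) (zs i) := h1.add_const _
    have h3 := h2.const_mul (1 / (2 * (K : ℝ)))
    have heq : (1 / (2 * (K : ℝ))) * (2 * (zt i - zs i) * (-1)) = (zs i - zt i) / (K : ℝ) := by
      field_simp
      ring
    rw [heq] at h3
    have hfe : (fun x : ℝ => (1 / (2 * (K : ℝ))) * ∑ k, (zt k - Function.update zs i x k) ^ 2)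
        = fun x : ℝ => (1 / (2 * (K : ℝ))) * ((zt i - x) ^ 2 + ∑ k ∈ Finset.univ.erase i, (zt k - zs k) ^ 2) :=
      funext fun x => by rw [hsum x]
    rw [hfe]
    exact h3
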